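/- Let G be a finite simple graph. The dominating ideal DI(G) equals the Alexander dual of the closed neighborhood ideal NI(G), i.e., DI(G) = ⋂_{v ∈ V(G)} (x_u : u ∈ N[v]). -/

import Mathlib

open MvPolynomial

variable {V : Type*} [Fintype V] (K : Type*) [Field K]

open scoped Classical in
/-- The monomial `∏_{j ∈ N[v]} x_j` of the closed neighborhood of `v`. -/
noncomputable def nbhdMonomial (G : SimpleGraph V) (v : V) : MvPolynomial V K :=
  X v * ∏ j ∈ Finset.univ.filter (fun j => G.Adj v j), X j

/-- The closed neighborhood ideal of a graph. -/
noncomputable def NI (G : SimpleGraph V) : Ideal (MvPolynomial V K) :=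
  Ideal.span (Set.range fun v => nbhdMonomial K G v)

/-- `S` is a dominating set of `G`. -/
def Dominates (G : SimpleGraph V) (S : Finset V) : Prop :=
  ∀ v : V, ∃ u ∈ S, u = v ∨ G.Adj v u

/-- `S` is a minimal dominating set of `G`. -/
def MinimalDominating (G : SimpleGraph V) (S : Finset V) : Prop :=
  Dominates G S ∧ ∀ T : Finset V, T ⊂ S → ¬ Dominates G T

/-- The dominating ideal of a graph. -/
noncomputable def DI (G : SimpleGraph V) : Ideal (MvPolynomial V K) :=
  Ideal.span { m | ∃ S : Finset V, MinimalDominating G S ∧ m = ∏ i ∈ S, X i }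

/-- Every dominating set contains a minimal dominating set. -/
lemma exists_minimalDominating_subset (G : SimpleGraph V) (S : Finset V)
    (hS : Dominates G S) : ∃ T ⊆ S, MinimalDominating G T := by
  classical
  let F : Finset (Finset V) := S.powerset.filter (fun T => Dominates G T)
  have hne : F.Nonempty := ⟨S, by simp [F, hS]⟩
  obtain ⟨T, hT, hmin⟩ := F.exists_min_image Finset.card hne
  simp only [F, Finset.mem_filter, Finset.mem_powerset] at hT
  refine ⟨T, hT.1, hT.2, fun T' hT' hdom => ?_⟩
  have : T ∈ F := by simp [F, hT.1, hT.2]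
  have hT'F : T' ∈ F := by
    simp only [F, Finset.mem_filter, Finset.mem_powerset]
    exact ⟨hT'.1.trans hT.1, hdom⟩
  exact absurd (hmin T' hT'F) (not_le.mpr (Finset.card_lt_card hT'))

open scoped Classical in
lemma prod_X_eq_monomial' (T : Finset V) :
    (∏ i ∈ T, (X i : MvPolynomial V K)) =
      monomial (∑ i ∈ T, Finsupp.single i 1) 1 := by
  induction T using Finset.induction_on with
  | empty => simp [monomial_zero']
  | insert _ _ h ih =>
    rw [Finset.prod_insert h, Finset.sum_insert h, ih, X, monomial_mul, one_mul]

/-- The dominating ideal is the Alexander dual of the closed neighborhood ideal: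
`DI(G) = ⋂_{v ∈ V(G)} (x_u : u ∈ N[v])`. -/
theorem DI_eq_alexander_dual_NI (G : SimpleGraph V) :
    DI K G = ⨅ v : V, Ideal.span (X '' { u : V | u = v ∨ G.Adj v u }) := by
  classical
  apply le_antisymm
  · rw [DI, Ideal.span_le]
    rintro m ⟨S, ⟨hdom, _⟩, rfl⟩
    simp only [SetLike.mem_coe, Ideal.mem_iInf]
    intro v
    obtain ⟨u, huS, hu⟩ := hdom v
    have hXu : (X u : MvPolynomial V K) ∈
        Ideal.span (X '' { u : V | u = v ∨ G.Adj v u }) :=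
      Ideal.subset_span ⟨u, hu, rfl⟩
    rw [← Finset.mul_prod_erase _ _ huS]
    exact Ideal.mul_mem_right _ _ hXu
  · intro f hf
    rw [Ideal.mem_iInf] at hf
    simp_rw [mem_ideal_span_X_image] at hf
    rw [f.as_sum]
    refine Ideal.sum_mem _ fun m hm => ?_
    -- the support of m is a dominating set
    have hdom : Dominates G m.support := by
      intro v
      obtain ⟨u, hu, hune⟩ := hf v m hm
      exact ⟨u, Finsupp.mem_support_iff.mpr hune, hu⟩
    obtain ⟨T, hTsub, hTmin⟩ := exists_minimalDominating_subset G _ hdom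
    have hgen : (∏ i ∈ T, (X i : MvPolynomial V K)) ∈ DI K G :=
      Ideal.subset_span ⟨T, hTmin, rfl⟩
    -- the monomial of T divides monomial m
    set d : V →₀ ℕ := ∑ i ∈ T, Finsupp.single i 1 with hd
    have hdle : d ≤ m := by
      intro i
      by_cases hi : i ∈ T
      · have : d i = 1 := by
          rw [hd, Finsupp.finset_sum_apply]
          rw [Finset.sum_eq_single i (fun b _ hb => Finsupp.single_eq_of_ne' hb)
            (fun h => absurd hi h), Finsupp.single_eq_same]
        rw [this]
        have : i ∈ m.support := hTsub hi
        rw [Finsupp.mem_support_iff] at this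
        omega
      · have : d i = 0 := by
          rw [hd, Finsupp.finset_sum_apply]
          exact Finset.sum_eq_zero fun b hb =>
            Finsupp.single_eq_of_ne' (fun h => hi (h ▸ hb))
        simp [this]
    have key : (monomial m (coeff m f) : MvPolynomial V K) =
        (∏ i ∈ T, X i) * monomial (m - d) (coeff m f) := by
      rw [prod_X_eq_monomial', ← hd, monomial_mul, one_mul,
        add_tsub_cancel_of_le hdle]
    rw [key]
    exact Ideal.mul_mem_right _ _ hgen
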